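/- arXiv:math/0402144 — 2 statements merged into one kernel-verified Lean document; each statement's English description precedes it below -/
import Mathlib

section
/- Let M be an N×N primitive nonnegative real matrix with primitivity index ℓ, let τ := τ(M^ℓ) be the Birkhoff coefficient of M^ℓ, and let v_M ∈ Δ_N be the right Perron eigenvector of M. Then for every x ∈ Δ_N and every m ∈ ℕ: d(F_M^m x, v_M) ≤ (τ^{⌊m/ℓ⌋}/(1−τ)) · d_M(x), where d_M(x) := min(ℓ·d(x, F_M x), d(x, F_M^ℓ x)). -/
open scoped BigOperators

namespace PerronApprox

/-- The open simplex `Δ_N`. -/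
def simplex (N : ℕ) : Set (Fin N → ℝ) :=
  {x | (∀ i, 0 < x i) ∧ ∑ i, x i = 1}

/-- The projective (Hilbert) distance. -/
noncomputable def projDist {N : ℕ} (x y : Fin N → ℝ) : ℝ :=
  Real.log ((⨆ i, x i / y i) / (⨅ i, x i / y i))

/-- The normalized action `F_M x = Mx / |Mx|₁` of a matrix on the simplex. -/
noncomputable def FM {N : ℕ} (M : Matrix (Fin N) (Fin N) ℝ) (x : Fin N → ℝ) :
    Fin N → ℝ :=
  fun i => M.mulVec x i / ∑ j, M.mulVec x j

open Classical in
/-- `Γ(M)` for a positive matrix (and `0` otherwise). -/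
noncomputable def birkGamma {N : ℕ} (M : Matrix (Fin N) (Fin N) ℝ) : ℝ :=
  if ∀ i j, 0 < M i j then
    ⨅ i, ⨅ j, ⨅ k, ⨅ l, Real.sqrt (M i j * M k l / (M i l * M k j))
  else 0

/-- The Birkhoff contraction coefficient `τ(M) = (1 − Γ(M))/(1 + Γ(M))`. -/
noncomputable def birkTau {N : ℕ} (M : Matrix (Fin N) (Fin N) ℝ) : ℝ :=
  (1 - birkGamma M) / (1 + birkGamma M)

/-- `d_M(x) = min (ℓ · d(x, F_M x), d(x, F_M^ℓ x))`. -/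
noncomputable def dMin {N : ℕ} (M : Matrix (Fin N) (Fin N) ℝ) (ℓ : ℕ)
    (x : Fin N → ℝ) : ℝ :=
  min ((ℓ : ℝ) * projDist x (FM M x)) (projDist x ((FM M)^[ℓ] x))

/-- `M` is primitive with primitivity index `ℓ`. -/
def PrimIndex {N : ℕ} (M : Matrix (Fin N) (Fin N) ℝ) (ℓ : ℕ) : Prop :=
  0 < ℓ ∧ (∀ i j, 0 < (M ^ ℓ) i j) ∧
    ∀ k, 0 < k → k < ℓ → ¬ ∀ i j, 0 < (M ^ k) i j





/-- positivity predicate -/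
def Pos {N : ℕ} (x : Fin N → ℝ) : Prop := ∀ i, 0 < x i

section Helpers

variable {ι : Type*} [Finite ι]

lemma ciInf_le' (f : ι → ℝ) (i : ι) : (⨅ j, f j) ≤ f i :=
  ciInf_le (Set.Finite.bddBelow (Set.finite_range f)) i

lemma le_ciSup' (f : ι → ℝ) (i : ι) : f i ≤ ⨆ j, f j :=
  le_ciSup (Set.Finite.bddAbove (Set.finite_range f)) i

lemma ciInf_pos' [Nonempty ι] {f : ι → ℝ} (h : ∀ i, 0 < f i) : 0 < ⨅ i, f i := by
  obtain ⟨a, ha⟩ := Finite.exists_min f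
  exact lt_of_lt_of_le (h a) (le_ciInf ha)

lemma ciSup_const_mul [Nonempty ι] (f : ι → ℝ) {c : ℝ} (hc : 0 ≤ c) :
    (⨆ i, c * f i) = c * ⨆ i, f i := by
  obtain ⟨a, ha⟩ := Finite.exists_max f
  have h1 : (⨆ i, f i) = f a := le_antisymm (ciSup_le ha) (le_ciSup' f a)
  have h2 : (⨆ i, c * f i) = c * f a :=
    le_antisymm (ciSup_le fun i => mul_le_mul_of_nonneg_left (ha i) hc)
      (le_ciSup' (fun i => c * f i) a)
  rw [h1, h2]

lemma ciInf_const_mul [Nonempty ι] (f : ι → ℝ) {c : ℝ} (hc : 0 ≤ c) :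
    (⨅ i, c * f i) = c * ⨅ i, f i := by
  obtain ⟨a, ha⟩ := Finite.exists_min f
  have h1 : (⨅ i, f i) = f a := le_antisymm (ciInf_le' f a) (le_ciInf ha)
  have h2 : (⨅ i, c * f i) = c * f a :=
    le_antisymm (ciInf_le' (fun i => c * f i) a)
      (le_ciInf fun i => mul_le_mul_of_nonneg_left (ha i) hc)
  rw [h1, h2]

end Helpers

section ProjDist

variable {N : ℕ}

lemma nonemptyFin (hN : 0 < N) : Nonempty (Fin N) := ⟨⟨0, hN⟩⟩

variable {x y z : Fin N → ℝ}

lemma ratio_pos (hx : Pos x) (hy : Pos y) (i : Fin N) : 0 < x i / y i :=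
  div_pos (hx i) (hy i)

lemma infR_pos (hN : 0 < N) (hx : Pos x) (hy : Pos y) : 0 < ⨅ i, x i / y i := by
  haveI := nonemptyFin hN
  exact ciInf_pos' (ratio_pos hx hy)

lemma supR_pos (hN : 0 < N) (hx : Pos x) (hy : Pos y) : 0 < ⨆ i, x i / y i := by
  haveI := nonemptyFin hN
  exact lt_of_lt_of_le (ratio_pos hx hy (Classical.arbitrary _))
    (le_ciSup' (fun i => x i / y i) _)

lemma infR_le_supR (hN : 0 < N) (hx : Pos x) (hy : Pos y) :
    (⨅ i, x i / y i) ≤ ⨆ i, x i / y i := by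
  haveI := nonemptyFin hN
  exact le_trans (ciInf_le' (fun i => x i / y i) (Classical.arbitrary _)) (le_ciSup' (fun i => x i / y i) _)

lemma projDist_eq (hN : 0 < N) (hx : Pos x) (hy : Pos y) :
    projDist x y = Real.log (⨆ i, x i / y i) - Real.log (⨅ i, x i / y i) :=
  Real.log_div (ne_of_gt (supR_pos hN hx hy)) (ne_of_gt (infR_pos hN hx hy))

lemma projDist_nonneg (hN : 0 < N) (hx : Pos x) (hy : Pos y) : 0 ≤ projDist x y := by
  rw [projDist_eq hN hx hy]
  have := Real.log_le_log (infR_pos hN hx hy) (infR_le_supR hN hx hy)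
  linarith

lemma projDist_self (hN : 0 < N) (hx : Pos x) : projDist x x = 0 := by
  haveI := nonemptyFin hN
  have h : ∀ i, x i / x i = (1 : ℝ) := fun i => div_self (ne_of_gt (hx i))
  simp only [projDist]
  simp_rw [h]
  rw [ciSup_const, ciInf_const]
  simp

/-- optimal bounds are attained -/
lemma bounds_of_ratio (hx : Pos x) (hy : Pos y) (i : Fin N) :
    (⨅ j, x j / y j) * y i ≤ x i ∧ x i ≤ (⨆ j, x j / y j) * y i := by
  constructor
  · have := ciInf_le' (fun j => x j / y j) i
    calc (⨅ j, x j / y j) * y i ≤ (x i / y i) * y i :=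
          mul_le_mul_of_nonneg_right this (le_of_lt (hy i))
      _ = x i := div_mul_cancel₀ _ (ne_of_gt (hy i))
  · have := le_ciSup' (fun j => x j / y j) i
    calc x i = (x i / y i) * y i := (div_mul_cancel₀ _ (ne_of_gt (hy i))).symm
      _ ≤ (⨆ j, x j / y j) * y i := mul_le_mul_of_nonneg_right this (le_of_lt (hy i))

lemma projDist_le_log (hN : 0 < N) {a b : ℝ} (hx : Pos x) (hy : Pos y) (ha : 0 < a)
    (hab : ∀ i, a * y i ≤ x i) (hba : ∀ i, x i ≤ b * y i) :
    projDist x y ≤ Real.log b - Real.log a := by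
  haveI := nonemptyFin hN
  have hlo : ∀ i, a ≤ x i / y i := fun i => (le_div_iff₀ (hy i)).2 (hab i)
  have hhi : ∀ i, x i / y i ≤ b := fun i => (div_le_iff₀ (hy i)).2 (hba i)
  have h1 : a ≤ ⨅ i, x i / y i := le_ciInf hlo
  have h2 : (⨆ i, x i / y i) ≤ b := ciSup_le hhi
  rw [projDist_eq hN hx hy]
  have l1 : Real.log (⨆ i, x i / y i) ≤ Real.log b :=
    Real.log_le_log (supR_pos hN hx hy) h2
  have l2 : Real.log a ≤ Real.log (⨅ i, x i / y i) := Real.log_le_log ha h1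
  linarith

lemma projDist_triangle (hN : 0 < N) (hx : Pos x) (hy : Pos y) (hz : Pos z) :
    projDist x z ≤ projDist x y + projDist y z := by
  haveI := nonemptyFin hN
  set a1 := ⨅ i, x i / y i with ha1
  set b1 := ⨆ i, x i / y i with hb1
  set a2 := ⨅ i, y i / z i with ha2
  set b2 := ⨆ i, y i / z i with hb2
  have ha1p : 0 < a1 := infR_pos hN hx hy
  have ha2p : 0 < a2 := infR_pos hN hy hz
  have hb1p : 0 < b1 := supR_pos hN hx hy
  have hb2p : 0 < b2 := supR_pos hN hy hz
  have hlow : ∀ i, (a1 * a2) * z i ≤ x i := by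
    intro i
    have e1 := (bounds_of_ratio hx hy i).1
    have e2 := (bounds_of_ratio hy hz i).1
    nlinarith [hz i]
  have hhigh : ∀ i, x i ≤ (b1 * b2) * z i := by
    intro i
    have e1 := (bounds_of_ratio hx hy i).2
    have e2 := (bounds_of_ratio hy hz i).2
    nlinarith [hz i]
  have := projDist_le_log hN hx hz (mul_pos ha1p ha2p) hlow hhigh
  rw [Real.log_mul (ne_of_gt hb1p) (ne_of_gt hb2p),
      Real.log_mul (ne_of_gt ha1p) (ne_of_gt ha2p)] at this
  rw [projDist_eq hN hx hy, projDist_eq hN hy hz]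
  linarith

lemma projDist_smul_smul (hN : 0 < N) {c d : ℝ} (hc : 0 < c) (hd : 0 < d)
    (hx : Pos x) (hy : Pos y) :
    projDist (c • x) (d • y) = projDist x y := by
  haveI := nonemptyFin hN
  have hr : ∀ i, (c • x) i / (d • y) i = (c / d) * (x i / y i) := by
    intro i
    simp only [Pi.smul_apply, smul_eq_mul]
    rw [mul_div_mul_comm]
  have hcd : (0:ℝ) ≤ c / d := le_of_lt (div_pos hc hd)
  simp only [projDist]
  simp_rw [hr]
  rw [ciSup_const_mul _ hcd, ciInf_const_mul _ hcd,
      mul_div_mul_left _ _ (ne_of_gt (div_pos hc hd))]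

lemma projDist_smul_left (hN : 0 < N) {c : ℝ} (hc : 0 < c) (hx : Pos x) (hy : Pos y) :
    projDist (c • x) y = projDist x y := by
  have := projDist_smul_smul hN hc one_pos hx hy
  rwa [one_smul] at this

lemma projDist_smul_right (hN : 0 < N) {c : ℝ} (hc : 0 < c) (hx : Pos x) (hy : Pos y) :
    projDist x (c • y) = projDist x y := by
  have := projDist_smul_smul hN one_pos hc hx hy
  rwa [one_smul] at this

end ProjDist




section Analytic

/-- derivative nonnegativity via weighted AM-GM -/
lemma phi_mono {t : ℝ} (ht0 : 0 < t) (ht1 : t ≤ 1) :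
    Monotone (fun a : ℝ =>
      Real.exp ((1 - t) / (1 + t) * a) * (1 + t * Real.exp a) - Real.exp a) := by
  set τ := (1 - t) / (1 + t) with hτ
  have h1t : (0:ℝ) < 1 + t := by linarith
  have hτ0 : 0 ≤ τ := div_nonneg (by linarith) (le_of_lt h1t)
  have hτ1 : τ ≤ 1 := by
    rw [hτ, div_le_one h1t]; linarith
  have hτ' : t * (1 + τ) = 1 - τ := by
    rw [hτ]; field_simp; ring
  apply monotone_of_deriv_nonneg
  · apply Differentiable.sub
    · apply Differentiable.mul
      · exact (Real.differentiable_exp.comp ((differentiable_id).const_mul τ))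
      · exact (Real.differentiable_exp.const_mul t).const_add 1
    · exact Real.differentiable_exp
  · intro a
    have hd1 : HasDerivAt (fun a : ℝ => τ * a) τ a := by
      simpa using (hasDerivAt_id a).const_mul τ
    have hd2 : HasDerivAt (fun a : ℝ => Real.exp (τ * a)) (Real.exp (τ * a) * τ) a :=
      hd1.exp
    have hd3 : HasDerivAt (fun a : ℝ => 1 + t * Real.exp a) (t * Real.exp a) a := by
      simpa using ((Real.hasDerivAt_exp a).const_mul t).const_add 1
    have hd4 : HasDerivAt
        (fun a : ℝ => Real.exp (τ * a) * (1 + t * Real.exp a) - Real.exp a)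
        (Real.exp (τ * a) * τ * (1 + t * Real.exp a) +
          Real.exp (τ * a) * (t * Real.exp a) - Real.exp a) a :=
      (hd2.mul hd3).sub (Real.hasDerivAt_exp a)
    rw [hd4.deriv]
    -- AM-GM step
    have key : Real.exp a ≤ τ * Real.exp (τ * a) + (1 - τ) * Real.exp ((1 + τ) * a) := by
      have am := Real.geom_mean_le_arith_mean2_weighted hτ0 (by linarith : (0:ℝ) ≤ 1 - τ)
        (le_of_lt (Real.exp_pos (τ * a))) (le_of_lt (Real.exp_pos ((1 + τ) * a)))
        (by ring)
      have e1 : Real.exp (τ * a) ^ τ = Real.exp (τ * a * τ) := (Real.exp_mul _ _).symm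
      have e2 : Real.exp ((1 + τ) * a) ^ (1 - τ) = Real.exp ((1 + τ) * a * (1 - τ)) :=
        (Real.exp_mul _ _).symm
      rw [e1, e2, ← Real.exp_add] at am
      have e3 : τ * a * τ + (1 + τ) * a * (1 - τ) = a := by ring
      rwa [e3] at am
    have expand : Real.exp (τ * a) * τ * (1 + t * Real.exp a) +
        Real.exp (τ * a) * (t * Real.exp a)
        = τ * Real.exp (τ * a) + (1 - τ) * Real.exp ((1 + τ) * a) := by
      have e : Real.exp ((1 + τ) * a) = Real.exp (τ * a) * Real.exp a := by
        rw [← Real.exp_add]; ring_nf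
      rw [e, ← hτ']; ring
    rw [expand]
    linarith

lemma exp_ineq {t a : ℝ} (ht0 : 0 < t) (ht1 : t ≤ 1) (ha : 0 ≤ a) :
    Real.exp a + t ≤ Real.exp ((1 - t) / (1 + t) * a) * (1 + t * Real.exp a) := by
  have h := phi_mono ht0 ht1 ha
  simp only [mul_zero, Real.exp_zero, mul_one] at h
  linarith

lemma rpow_ineq {s t : ℝ} (hs : 1 ≤ s) (ht0 : 0 < t) (ht1 : t ≤ 1) :
    s + t ≤ s ^ ((1 - t) / (1 + t)) * (1 + t * s) := by
  have hs0 : 0 < s := lt_of_lt_of_le one_pos hs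
  have ha : 0 ≤ Real.log s := Real.log_nonneg hs
  have h := exp_ineq ht0 ht1 ha
  rw [Real.exp_log hs0] at h
  rw [Real.rpow_def_of_pos hs0, mul_comm (Real.log s)]
  exact h

/-- the squared version needed for the vertex inequality -/
lemma star_sq {b t : ℝ} (hb : 1 ≤ b) (ht0 : 0 < t) (ht1 : t ≤ 1) :
    (Real.sqrt b + t) ^ 2 ≤ b ^ ((1 - t) / (1 + t)) * (1 + Real.sqrt b * t) ^ 2 := by
  set s := Real.sqrt b with hsdef
  set τ := (1 - t) / (1 + t) with hτ
  have hb0 : (0:ℝ) ≤ b := by linarith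
  have hs1 : 1 ≤ s := Real.one_le_sqrt.2 hb
  have hs0 : 0 < s := lt_of_lt_of_le one_pos hs1
  have hss : s * s = b := Real.mul_self_sqrt hb0
  have h := rpow_ineq hs1 ht0 ht1
  have hsq : (s + t) ^ 2 ≤ (s ^ τ * (1 + t * s)) ^ 2 := by
    have h1 : 0 ≤ s + t := by linarith
    nlinarith [h]
  have hrw : (s ^ τ * (1 + t * s)) ^ 2 = (s ^ τ * s ^ τ) * (1 + s * t) ^ 2 := by
    ring
  have hpow : s ^ τ * s ^ τ = b ^ τ := by
    rw [← Real.mul_rpow (le_of_lt hs0) (le_of_lt hs0), hss]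
  calc (s + t) ^ 2 ≤ (s ^ τ * (1 + t * s)) ^ 2 := hsq
    _ = (s ^ τ * s ^ τ) * (1 + s * t) ^ 2 := hrw
    _ = b ^ τ * (1 + s * t) ^ 2 := by rw [hpow]

/-- homogeneous diamond inequality -/
lemma diamondW {s t K W X W' X' : ℝ} (hs : 1 ≤ s) (ht0 : 0 < t) (ht1 : t ≤ 1)
    (hW : 0 < W) (hX : 0 < X) (hW' : 0 < W') (hX' : 0 < X')
    (hcross : t ^ 2 * (W * X') ≤ X * W')
    (hstar2 : (s + t) ^ 2 ≤ K * (1 + s * t) ^ 2) :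
    (s ^ 2 * W + X) * (W' + X') ≤ K * ((W + X) * (s ^ 2 * W' + X')) := by
  have hs0 : (0:ℝ) < s := lt_of_lt_of_le one_pos hs
  have hst : (0:ℝ) < 1 + s * t := by have := mul_pos hs0 ht0; linarith
  -- main polynomial inequality
  have hh : (s ^ 2 * W + X) * (W' + X') * (1 + s * t) ^ 2 ≤
      (s + t) ^ 2 * ((W + X) * (s ^ 2 * W' + X')) := by
    obtain ⟨A, hA⟩ : ∃ A : ℝ,
        A = (s + t) ^ 2 * (s ^ 2 * W' + X') - s ^ 2 * (W' + X') * (1 + s * t) ^ 2 := ⟨_, rfl⟩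
    obtain ⟨f0, hf0⟩ : ∃ f0 : ℝ,
        f0 = (s + t) ^ 2 * (s ^ 2 * W' + X') - (W' + X') * (1 + s * t) ^ 2 := ⟨_, rfl⟩
    have hf0id : f0 = W' * ((s ^ 2 - 1) * (s ^ 2 + 2 * s * t + 1)) +
        X' * ((s - 1) * (1 - t) * (1 + s) * (1 + t)) := by rw [hf0]; ring
    have hf0nn : 0 ≤ f0 := by
      rw [hf0id]
      have n1 : (0:ℝ) ≤ (s ^ 2 - 1) * (s ^ 2 + 2 * s * t + 1) := by
        have e1 : (0:ℝ) ≤ s ^ 2 - 1 := by nlinarith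
        have e2 : (0:ℝ) ≤ s ^ 2 + 2 * s * t + 1 := by nlinarith [mul_pos hs0 ht0]
        exact mul_nonneg e1 e2
      have n2 : (0:ℝ) ≤ (s - 1) * (1 - t) * (1 + s) * (1 + t) := by
        have := mul_nonneg (mul_nonneg (mul_nonneg (by linarith : (0:ℝ) ≤ s - 1)
          (by linarith : (0:ℝ) ≤ 1 - t)) (by linarith : (0:ℝ) ≤ 1 + s))
          (by linarith : (0:ℝ) ≤ 1 + t)
        linarith
      nlinarith [mul_nonneg (le_of_lt hW') n1, mul_nonneg (le_of_lt hX') n2]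
    have hF : (s + t) ^ 2 * ((W + X) * (s ^ 2 * W' + X')) -
        (s ^ 2 * W + X) * (W' + X') * (1 + s * t) ^ 2 = W * A + X * f0 := by
      rw [hA, hf0]; ring
    have hmain : 0 ≤ W * A + X * f0 := by
      rcases le_or_gt 0 A with hA0 | hA0
      · exact add_nonneg (mul_nonneg (le_of_lt hW) hA0)
          (mul_nonneg (le_of_lt hX) hf0nn)
      · have hid : W' * A + t ^ 2 * X' * f0 =
            (s ^ 2 - 1) * (1 - t ^ 2) * (s * W' - t * X') ^ 2 := by
          rw [hA, hf0]; ring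
        have hg : 0 ≤ X * (W' * A + t ^ 2 * X' * f0) := by
          rw [hid]
          have n1 : (0:ℝ) ≤ s ^ 2 - 1 := by nlinarith
          have n2 : (0:ℝ) ≤ 1 - t ^ 2 := by nlinarith
          have : (0:ℝ) ≤ (s ^ 2 - 1) * (1 - t ^ 2) * (s * W' - t * X') ^ 2 := by
            positivity
          exact mul_nonneg (le_of_lt hX) this
        have h1 : X * W' * A ≤ t ^ 2 * (W * X') * A :=
          mul_le_mul_of_nonpos_right hcross (le_of_lt hA0)
        have e1 : t ^ 2 * X' * (W * A + X * f0)
            = t ^ 2 * (W * X') * A + t ^ 2 * X' * X * f0 := by ring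
        have e2 : X * (W' * A + t ^ 2 * X' * f0)
            = X * W' * A + t ^ 2 * X' * X * f0 := by ring
        have h2 : 0 ≤ t ^ 2 * X' * (W * A + X * f0) := by linarith [hg, h1, e1, e2]
        have h3 : (0:ℝ) < t ^ 2 * X' := by positivity
        have h4 := div_nonneg h2 (le_of_lt h3)
        rwa [mul_div_cancel_left₀ _ (ne_of_gt h3)] at h4
    linarith [hF, hmain]
  -- conclude
  have hpos : 0 ≤ (W + X) * (s ^ 2 * W' + X') := by positivity
  have step : (s + t) ^ 2 * ((W + X) * (s ^ 2 * W' + X')) ≤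
      K * (1 + s * t) ^ 2 * ((W + X) * (s ^ 2 * W' + X')) :=
    mul_le_mul_of_nonneg_right hstar2 hpos
  have hst2 : (0:ℝ) < (1 + s * t) ^ 2 := by positivity
  have hfin : (s ^ 2 * W + X) * (W' + X') * (1 + s * t) ^ 2 ≤
      K * ((W + X) * (s ^ 2 * W' + X')) * (1 + s * t) ^ 2 := by
    calc (s ^ 2 * W + X) * (W' + X') * (1 + s * t) ^ 2
        ≤ (s + t) ^ 2 * ((W + X) * (s ^ 2 * W' + X')) := hh
      _ ≤ K * (1 + s * t) ^ 2 * ((W + X) * (s ^ 2 * W' + X')) := step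
      _ = K * ((W + X) * (s ^ 2 * W' + X')) * (1 + s * t) ^ 2 := by ring
  exact le_of_mul_le_mul_right hfin hst2

/-- vertex inequality in α/β form -/
lemma vertex_ineq {α β s t K W X W' X' : ℝ} (hα : 0 < α) (hβ : β = s ^ 2 * α)
    (hs : 1 ≤ s) (ht0 : 0 < t) (ht1 : t ≤ 1)
    (hW : 0 < W) (hX : 0 < X) (hW' : 0 < W') (hX' : 0 < X')
    (hcross : t ^ 2 * (W * X') ≤ X * W')
    (hstar2 : (s + t) ^ 2 ≤ K * (1 + s * t) ^ 2) :
    (β * W + α * X) * (W' + X') ≤ K * ((W + X) * (β * W' + α * X')) := by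
  subst hβ
  have h := diamondW hs ht0 ht1 hW hX hW' hX' hcross hstar2
  have h2 := mul_le_mul_of_nonneg_left h (le_of_lt hα)
  calc (s ^ 2 * α * W + α * X) * (W' + X')
      = α * ((s ^ 2 * W + X) * (W' + X')) := by ring
    _ ≤ α * (K * ((W + X) * (s ^ 2 * W' + X'))) := h2
    _ = K * ((W + X) * (s ^ 2 * α * W' + α * X')) := by ring

end Analytic




lemma box_bound {N : ℕ} (w w' : Fin N → ℝ)
    (hw : ∀ j, 0 < w j) (hw' : ∀ j, 0 < w' j)
    {α β s t K : ℝ} (hα : 0 < α) (hβ : β = s ^ 2 * α) (hs : 1 ≤ s)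
    (ht0 : 0 < t) (ht1 : t ≤ 1)
    (hK1 : 1 ≤ K) (hstar2 : (s + t) ^ 2 ≤ K * (1 + s * t) ^ 2)
    (hcross : ∀ j j', t ^ 2 * (w j * w' j') ≤ w j' * w' j)
    (r : Fin N → ℝ) (hr1 : ∀ j, α ≤ r j) (hr2 : ∀ j, r j ≤ β) :
    (∑ j, w j * r j) * (∑ j, w' j) ≤ K * ((∑ j, w j) * (∑ j, w' j * r j)) := by
  classical
  suffices main : ∀ T : Finset (Fin N), ∀ r : Fin N → ℝ, (∀ j, α ≤ r j) → (∀ j, r j ≤ β) →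
      (∀ j, j ∉ T → r j = α ∨ r j = β) →
      (∑ j, w j * r j) * (∑ j, w' j) ≤ K * ((∑ j, w j) * (∑ j, w' j * r j)) by
    exact main Finset.univ r hr1 hr2 (fun j hj => absurd (Finset.mem_univ j) hj)
  intro T
  induction T using Finset.induction_on with
  | empty =>
    intro r h1 h2 h3
    set S : Finset (Fin N) := Finset.univ.filter (fun j => r j = β) with hSdef
    set Sc : Finset (Fin N) := Finset.univ.filter (fun j => ¬ r j = β) with hScdef
    have hsplitr : ∀ u : Fin N → ℝ, (∑ j, u j * r j) =
        β * (∑ j ∈ S, u j) + α * (∑ j ∈ Sc, u j) := by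
      intro u
      rw [← Finset.sum_filter_add_sum_filter_not Finset.univ (fun j => r j = β)
        (fun j => u j * r j)]
      congr 1
      · rw [Finset.mul_sum]
        apply Finset.sum_congr rfl
        intro j hj
        have : r j = β := (Finset.mem_filter.1 hj).2
        rw [this]; ring
      · rw [Finset.mul_sum]
        apply Finset.sum_congr rfl
        intro j hj
        have hne : ¬ r j = β := (Finset.mem_filter.1 hj).2
        have : r j = α := (h3 j (Finset.notMem_empty j)).resolve_right hne
        rw [this]; ring
    have hsplitu : ∀ u : Fin N → ℝ, (∑ j, u j) =
        (∑ j ∈ S, u j) + (∑ j ∈ Sc, u j) :=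
      fun u => (Finset.sum_filter_add_sum_filter_not Finset.univ _ u).symm
    rw [hsplitr w, hsplitr w', hsplitu w, hsplitu w']
    set W := ∑ j ∈ S, w j
    set X := ∑ j ∈ Sc, w j
    set W' := ∑ j ∈ S, w' j
    set X' := ∑ j ∈ Sc, w' j
    have hαβ : α ≤ β := by
      nlinarith [mul_nonneg (mul_nonneg (sub_nonneg.2 hs)
        (by linarith : (0:ℝ) ≤ s + 1)) hα.le]
    by_cases hS : S = ∅
    · have eW : W = 0 := by simp [W, hS]
      have eW' : W' = 0 := by simp [W', hS]
      rw [eW, eW']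
      have hX : (0:ℝ) ≤ X := Finset.sum_nonneg fun j _ => (hw j).le
      have hX' : (0:ℝ) ≤ X' := Finset.sum_nonneg fun j _ => (hw' j).le
      nlinarith [mul_nonneg (mul_nonneg hα.le hX) hX']
    by_cases hSc : Sc = ∅
    · have eX : X = 0 := by simp [X, hSc]
      have eX' : X' = 0 := by simp [X', hSc]
      rw [eX, eX']
      have hW : (0:ℝ) ≤ W := Finset.sum_nonneg fun j _ => (hw j).le
      have hW' : (0:ℝ) ≤ W' := Finset.sum_nonneg fun j _ => (hw' j).le
      have hβ0 : (0:ℝ) ≤ β := le_trans hα.le hαβ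
      nlinarith [mul_nonneg (mul_nonneg hβ0 hW) hW']
    · have hSne : S.Nonempty := Finset.nonempty_iff_ne_empty.2 hS
      have hScne : Sc.Nonempty := Finset.nonempty_iff_ne_empty.2 hSc
      have hW : 0 < W := Finset.sum_pos (fun j _ => hw j) hSne
      have hX : 0 < X := Finset.sum_pos (fun j _ => hw j) hScne
      have hW' : 0 < W' := Finset.sum_pos (fun j _ => hw' j) hSne
      have hX' : 0 < X' := Finset.sum_pos (fun j _ => hw' j) hScne
      have hcrossSum : t ^ 2 * (W * X') ≤ X * W' := by
        have e1 : W * X' = ∑ j ∈ S, ∑ j' ∈ Sc, w j * w' j' :=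
          Finset.sum_mul_sum S Sc w w'
        have e2 : X * W' = ∑ j ∈ S, ∑ j' ∈ Sc, w j' * w' j := by
          rw [mul_comm]
          rw [Finset.sum_mul_sum S Sc w' (fun j' => w j')]
          apply Finset.sum_congr rfl; intro j _
          apply Finset.sum_congr rfl; intro j' _
          ring
        rw [e1, e2, Finset.mul_sum]
        apply Finset.sum_le_sum
        intro j _
        rw [Finset.mul_sum]
        apply Finset.sum_le_sum
        intro j' _
        exact hcross j j'
      exact vertex_ineq hα hβ hs ht0 ht1 hW hX hW' hX' hcrossSum hstar2
  | @insert a T' haT IH =>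
    intro r h1 h2 h3
    have hsplit : ∀ (u : Fin N → ℝ) (c : ℝ),
        (∑ j, u j * (Function.update r a c) j) =
        (∑ j ∈ Finset.univ.erase a, u j * r j) + u a * c := by
      intro u c
      rw [← Finset.sum_erase_add Finset.univ _ (Finset.mem_univ a)]
      congr 1
      · apply Finset.sum_congr rfl
        intro j hj
        rw [Function.update_of_ne (Finset.ne_of_mem_erase hj)]
      · rw [Function.update_self]
    have gsplit : ∀ u : Fin N → ℝ, (∑ j, u j * r j) =
        (∑ j ∈ Finset.univ.erase a, u j * r j) + u a * r a :=
      fun u => (Finset.sum_erase_add _ _ (Finset.mem_univ a)).symm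
    -- apply IH at the two endpoints
    have mkbd : ∀ c, α ≤ c → c ≤ β → (∀ j, α ≤ Function.update r a c j) ∧
        (∀ j, Function.update r a c j ≤ β) := by
      intro c hc1 hc2
      constructor <;> intro j <;> rcases eq_or_ne j a with rfl | hne
      · rw [Function.update_self]; exact hc1
      · rw [Function.update_of_ne hne]; exact h1 j
      · rw [Function.update_self]; exact hc2
      · rw [Function.update_of_ne hne]; exact h2 j
    have mkfree : ∀ c, (c = α ∨ c = β) → ∀ j, j ∉ T' →
        Function.update r a c j = α ∨ Function.update r a c j = β := by
      intro c hc j hj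
      rcases eq_or_ne j a with rfl | hne
      · rwa [Function.update_self]
      · rw [Function.update_of_ne hne]
        exact h3 j (by simp [Finset.mem_insert, hj, hne])
    have hαβ : α ≤ β := by
      nlinarith [mul_nonneg (mul_nonneg (sub_nonneg.2 hs)
        (by linarith : (0:ℝ) ≤ s + 1)) hα.le]
    have hIα := IH (Function.update r a α) (mkbd α le_rfl hαβ).1 (mkbd α le_rfl hαβ).2
      (mkfree α (Or.inl rfl))
    have hIβ := IH (Function.update r a β) (mkbd β hαβ le_rfl).1 (mkbd β hαβ le_rfl).2
      (mkfree β (Or.inr rfl))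
    rw [hsplit w α, hsplit w' α] at hIα
    rw [hsplit w β, hsplit w' β] at hIβ
    rw [gsplit w, gsplit w']
    set Sr := ∑ j ∈ Finset.univ.erase a, w j * r j
    set Sr' := ∑ j ∈ Finset.univ.erase a, w' j * r j
    set Sw := ∑ j, w j
    set Sw' := ∑ j, w' j
    -- affine in c := r a
    rcases le_total 0 (K * (Sw * w' a) - w a * Sw') with hco | hco
    · nlinarith [hIα, mul_nonneg (sub_nonneg.2 (h1 a)) hco]
    · nlinarith [hIβ, mul_nonneg (sub_nonneg.2 (h2 a)) (neg_nonneg.2 hco)]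


section MatrixLemmas

variable {N : ℕ}

lemma mulVec_apply' (M : Matrix (Fin N) (Fin N) ℝ) (x : Fin N → ℝ) (i : Fin N) :
    M.mulVec x i = ∑ j, M i j * x j := by
  simp [Matrix.mulVec, dotProduct]

lemma mulVec_pos (M : Matrix (Fin N) (Fin N) ℝ) (hM : ∀ i j, 0 ≤ M i j)
    (hrow : ∀ i, ∃ j, 0 < M i j) {x : Fin N → ℝ} (hx : Pos x) :
    Pos (M.mulVec x) := by
  intro i
  rw [mulVec_apply']
  obtain ⟨j0, hj0⟩ := hrow i
  exact Finset.sum_pos' (fun j _ => mul_nonneg (hM i j) (hx j).le)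
    ⟨j0, Finset.mem_univ j0, mul_pos hj0 (hx j0)⟩

lemma row_pos {M : Matrix (Fin N) (Fin N) ℝ} {ℓ : ℕ} (hM : ∀ i j, 0 ≤ M i j)
    (hℓ : 0 < ℓ) (hpow : ∀ i j, 0 < (M ^ ℓ) i j) : ∀ i, ∃ j, 0 < M i j := by
  intro i
  by_contra hcon
  push_neg at hcon
  have hz : ∀ j, M i j = 0 := fun j => le_antisymm (hcon j) (hM i j)
  obtain ⟨k, rfl⟩ : ∃ k, ℓ = k + 1 := ⟨ℓ - 1, (Nat.succ_pred_eq_of_pos hℓ).symm⟩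
  have : (M ^ (k + 1)) i i = 0 := by
    rw [pow_succ', Matrix.mul_apply]
    apply Finset.sum_eq_zero
    intro j _
    rw [hz j, zero_mul]
  exact absurd (hpow i i) (by rw [this]; exact lt_irrefl 0)

lemma pow_mulVec_pos {M : Matrix (Fin N) (Fin N) ℝ} (hM : ∀ i j, 0 ≤ M i j)
    (hrow : ∀ i, ∃ j, 0 < M i j) {x : Fin N → ℝ} (hx : Pos x) (k : ℕ) :
    Pos ((M ^ k).mulVec x) := by
  induction k with
  | zero => rw [pow_zero, Matrix.one_mulVec]; exact hx
  | succ k ih =>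
    rw [pow_succ', ← Matrix.mulVec_mulVec]
    exact mulVec_pos M hM hrow ih

lemma sum_mulVec_pos (hN : 0 < N) {z : Fin N → ℝ} (hz : Pos z) :
    0 < ∑ j, z j := by
  haveI := nonemptyFin hN
  exact Finset.sum_pos (fun j _ => hz j) Finset.univ_nonempty

lemma FM_eq (M : Matrix (Fin N) (Fin N) ℝ) (x : Fin N → ℝ) :
    FM M x = (∑ j, M.mulVec x j)⁻¹ • M.mulVec x := by
  funext i
  simp [FM, Pi.smul_apply, smul_eq_mul, div_eq_mul_inv, mul_comm]

lemma FM_smul (M : Matrix (Fin N) (Fin N) ℝ) {c : ℝ} (hc : 0 < c) (x : Fin N → ℝ) :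
    FM M (c • x) = FM M x := by
  funext i
  simp only [FM, Matrix.mulVec_smul, Pi.smul_apply, smul_eq_mul]
  rw [← Finset.mul_sum]
  exact mul_div_mul_left _ _ (ne_of_gt hc)

lemma FM_iter (hN : 0 < N) {M : Matrix (Fin N) (Fin N) ℝ} (hM : ∀ i j, 0 ≤ M i j)
    (hrow : ∀ i, ∃ j, 0 < M i j) {x : Fin N → ℝ} (hx : Pos x) (k : ℕ) :
    ∃ c : ℝ, 0 < c ∧ (FM M)^[k] x = c • ((M ^ k).mulVec x) := by
  induction k with
  | zero =>
    refine ⟨1, one_pos, ?_⟩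
    simp [pow_zero, Matrix.one_mulVec]
  | succ k ih =>
    obtain ⟨c, hc, hck⟩ := ih
    have hpk : Pos ((M ^ k).mulVec x) := pow_mulVec_pos hM hrow hx k
    have hps : 0 < ∑ j, M.mulVec ((M ^ k).mulVec x) j :=
      sum_mulVec_pos hN (mulVec_pos M hM hrow hpk)
    refine ⟨(∑ j, M.mulVec ((M ^ k).mulVec x) j)⁻¹, inv_pos.2 hps, ?_⟩
    rw [Function.iterate_succ_apply', hck, FM_smul M hc, FM_eq]
    rw [Matrix.mulVec_mulVec, ← pow_succ']

lemma FM_fixed {M : Matrix (Fin N) (Fin N) ℝ} {ρ : ℝ} (hρ : 0 < ρ)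
    {v : Fin N → ℝ} (hsum : ∑ i, v i = 1) (heig : M.mulVec v = ρ • v) :
    FM M v = v := by
  funext i
  simp only [FM, heig, Pi.smul_apply, smul_eq_mul]
  rw [← Finset.mul_sum, hsum, mul_one]
  exact mul_div_cancel_left₀ _ (ne_of_gt hρ)

lemma mulVec_nonexpansive (hN : 0 < N) (M : Matrix (Fin N) (Fin N) ℝ)
    (hM : ∀ i j, 0 ≤ M i j) (hrow : ∀ i, ∃ j, 0 < M i j)
    {x y : Fin N → ℝ} (hx : Pos x) (hy : Pos y) :
    projDist (M.mulVec x) (M.mulVec y) ≤ projDist x y := by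
  have hMx := mulVec_pos M hM hrow hx
  have hMy := mulVec_pos M hM hrow hy
  have hαp := infR_pos hN hx hy
  have hlo : ∀ i, (⨅ j, x j / y j) * M.mulVec y i ≤ M.mulVec x i := by
    intro i
    rw [mulVec_apply', mulVec_apply', Finset.mul_sum]
    apply Finset.sum_le_sum
    intro j _
    have h := (bounds_of_ratio hx hy j).1
    calc (⨅ j, x j / y j) * (M i j * y j) = M i j * ((⨅ j, x j / y j) * y j) := by ring
      _ ≤ M i j * x j := mul_le_mul_of_nonneg_left h (hM i j)
  have hhi : ∀ i, M.mulVec x i ≤ (⨆ j, x j / y j) * M.mulVec y i := by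
    intro i
    rw [mulVec_apply', mulVec_apply', Finset.mul_sum]
    apply Finset.sum_le_sum
    intro j _
    have h := (bounds_of_ratio hx hy j).2
    calc M i j * x j ≤ M i j * ((⨆ j, x j / y j) * y j) :=
          mul_le_mul_of_nonneg_left h (hM i j)
      _ = (⨆ j, x j / y j) * (M i j * y j) := by ring
  have := projDist_le_log hN hMx hMy hαp hlo hhi
  rwa [← projDist_eq hN hx hy] at this

lemma pow_nonexpansive (hN : 0 < N) {M : Matrix (Fin N) (Fin N) ℝ}
    (hM : ∀ i j, 0 ≤ M i j) (hrow : ∀ i, ∃ j, 0 < M i j)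
    {x y : Fin N → ℝ} (hx : Pos x) (hy : Pos y) (k : ℕ) :
    projDist ((M ^ k).mulVec x) ((M ^ k).mulVec y) ≤ projDist x y := by
  induction k with
  | zero => rw [pow_zero, Matrix.one_mulVec, Matrix.one_mulVec]
  | succ k ih =>
    rw [pow_succ', ← Matrix.mulVec_mulVec, ← Matrix.mulVec_mulVec]
    exact le_trans (mulVec_nonexpansive hN M hM hrow
      (pow_mulVec_pos hM hrow hx k) (pow_mulVec_pos hM hrow hy k)) ih

end MatrixLemmas

section Gamma

variable {N : ℕ} {A : Matrix (Fin N) (Fin N) ℝ}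

lemma birkGamma_eq (hA : ∀ i j, 0 < A i j) :
    birkGamma A = ⨅ i, ⨅ j, ⨅ k, ⨅ l, Real.sqrt (A i j * A k l / (A i l * A k j)) := by
  rw [birkGamma, if_pos hA]

lemma birkGamma_pos (hN : 0 < N) (hA : ∀ i j, 0 < A i j) : 0 < birkGamma A := by
  haveI := nonemptyFin hN
  rw [birkGamma_eq hA]
  apply ciInf_pos'; intro i
  apply ciInf_pos'; intro j
  apply ciInf_pos'; intro k
  apply ciInf_pos'; intro l
  exact Real.sqrt_pos.2 (div_pos (mul_pos (hA i j) (hA k l)) (mul_pos (hA i l) (hA k j)))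

lemma birkGamma_le_sqrt (hA : ∀ i j, 0 < A i j) (i j k l : Fin N) :
    birkGamma A ≤ Real.sqrt (A i j * A k l / (A i l * A k j)) := by
  rw [birkGamma_eq hA]
  calc (⨅ i, ⨅ j, ⨅ k, ⨅ l, Real.sqrt (A i j * A k l / (A i l * A k j)))
      ≤ ⨅ j', ⨅ k', ⨅ l', Real.sqrt (A i j' * A k' l' / (A i l' * A k' j')) :=
        ciInf_le' _ i
    _ ≤ ⨅ k', ⨅ l', Real.sqrt (A i j * A k' l' / (A i l' * A k' j)) := ciInf_le' _ j
    _ ≤ ⨅ l', Real.sqrt (A i j * A k l' / (A i l' * A k j)) := ciInf_le' _ k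
    _ ≤ Real.sqrt (A i j * A k l / (A i l * A k j)) := ciInf_le' _ l

lemma birkGamma_le_one (hN : 0 < N) (hA : ∀ i j, 0 < A i j) : birkGamma A ≤ 1 := by
  haveI := nonemptyFin hN
  obtain ⟨i0⟩ := nonemptyFin hN
  have h := birkGamma_le_sqrt hA i0 i0 i0 i0
  rwa [div_self (ne_of_gt (mul_pos (hA i0 i0) (hA i0 i0))), Real.sqrt_one] at h

lemma birkGamma_sq_le (hN : 0 < N) (hA : ∀ i j, 0 < A i j) (i j k l : Fin N) :
    birkGamma A ^ 2 * (A i l * A k j) ≤ A i j * A k l := by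
  have hΓ0 : 0 ≤ birkGamma A := (birkGamma_pos hN hA).le
  have h := birkGamma_le_sqrt hA i j k l
  have hr : 0 ≤ A i j * A k l / (A i l * A k j) :=
    le_of_lt (div_pos (mul_pos (hA i j) (hA k l)) (mul_pos (hA i l) (hA k j)))
  have hsq : birkGamma A ^ 2 ≤ A i j * A k l / (A i l * A k j) := by
    have := pow_le_pow_left₀ hΓ0 h 2
    rwa [Real.sq_sqrt hr] at this
  calc birkGamma A ^ 2 * (A i l * A k j)
      ≤ (A i j * A k l / (A i l * A k j)) * (A i l * A k j) :=
        mul_le_mul_of_nonneg_right hsq (le_of_lt (mul_pos (hA i l) (hA k j)))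
    _ = A i j * A k l := div_mul_cancel₀ _ (ne_of_gt (mul_pos (hA i l) (hA k j)))

lemma birkTau_nonneg (hN : 0 < N) (hA : ∀ i j, 0 < A i j) : 0 ≤ birkTau A := by
  have h1 := birkGamma_pos hN hA
  have h2 := birkGamma_le_one hN hA
  exact div_nonneg (by linarith) (by linarith)

lemma birkTau_lt_one (hN : 0 < N) (hA : ∀ i j, 0 < A i j) : birkTau A < 1 := by
  have h1 := birkGamma_pos hN hA
  rw [birkTau, div_lt_one (by linarith)]
  linarith

end Gamma

section Birkhoff

lemma birkhoff_contraction {N : ℕ} (hN : 0 < N) (A : Matrix (Fin N) (Fin N) ℝ)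
    (hA : ∀ i j, 0 < A i j) {y z : Fin N → ℝ} (hy : Pos y) (hz : Pos z) :
    projDist (A.mulVec y) (A.mulVec z) ≤ birkTau A * projDist y z := by
  haveI := nonemptyFin hN
  have hΓ0 : 0 < birkGamma A := birkGamma_pos hN hA
  have hΓ1 : birkGamma A ≤ 1 := birkGamma_le_one hN hA
  set Γ := birkGamma A with hΓdef
  set τ := birkTau A with hτdef
  have hτeq : τ = (1 - Γ) / (1 + Γ) := rfl
  set α := ⨅ i, y i / z i with hαdef
  set β := ⨆ i, y i / z i with hβdef
  have hα0 : 0 < α := infR_pos hN hy hz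
  have hβ0 : 0 < β := supR_pos hN hy hz
  have hαβ : α ≤ β := infR_le_supR hN hy hz
  set b := β / α with hbdef
  have hb1 : (1:ℝ) ≤ b := (one_le_div hα0).2 hαβ
  set s := Real.sqrt b with hsdef
  have hs1 : 1 ≤ s := Real.one_le_sqrt.2 hb1
  have hss : s ^ 2 = b := Real.sq_sqrt (by linarith)
  set K := b ^ τ with hKdef
  have hτ0 : 0 ≤ τ := by rw [hτeq]; exact div_nonneg (by linarith) (by linarith)
  have hK1 : 1 ≤ K := by
    calc (1:ℝ) = b ^ (0:ℝ) := (Real.rpow_zero b).symm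
      _ ≤ b ^ τ := Real.rpow_le_rpow_of_exponent_le hb1 hτ0
  have hstar2 : (s + Γ) ^ 2 ≤ K * (1 + s * Γ) ^ 2 := by
    have h := star_sq hb1 hΓ0 hΓ1
    rw [hKdef, hτeq]
    exact h
  have hβs : β = s ^ 2 * α := by
    rw [hss, hbdef]
    field_simp
  have hAy : Pos (A.mulVec y) :=
    mulVec_pos A (fun i j => (hA i j).le) (fun i => ⟨i, hA i i⟩) hy
  have hAz : Pos (A.mulVec z) :=
    mulVec_pos A (fun i j => (hA i j).le) (fun i => ⟨i, hA i i⟩) hz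
  -- core inequality
  have CI : ∀ i k, A.mulVec y i * A.mulVec z k ≤ K * (A.mulVec z i * A.mulVec y k) := by
    intro i k
    set w : Fin N → ℝ := fun j => A i j * z j with hwdef
    set w' : Fin N → ℝ := fun j => A k j * z j with hw'def
    have hw : ∀ j, 0 < w j := fun j => mul_pos (hA i j) (hz j)
    have hw' : ∀ j, 0 < w' j := fun j => mul_pos (hA k j) (hz j)
    have hcross : ∀ j j', Γ ^ 2 * (w j * w' j') ≤ w j' * w' j := by
      intro j j'
      have h := birkGamma_sq_le hN hA i j' k j
      calc Γ ^ 2 * (w j * w' j') = Γ ^ 2 * (A i j * A k j') * (z j * z j') := by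
            simp only [hwdef, hw'def]; ring
        _ ≤ A i j' * A k j * (z j * z j') :=
            mul_le_mul_of_nonneg_right h (mul_nonneg (hz j).le (hz j').le)
        _ = w j' * w' j := by simp only [hwdef, hw'def]; ring
    have hbox := box_bound w w' hw hw' hα0 hβs hs1 hΓ0 hΓ1 hK1 hstar2 hcross
      (fun j => y j / z j) (fun j => ciInf_le' (fun j' => y j' / z j') j)
      (fun j => le_ciSup' (fun j' => y j' / z j') j)
    have ew : ∀ j, w j * (y j / z j) = A i j * y j := by
      intro j
      calc w j * (y j / z j) = A i j * (y j / z j * z j) := by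
            simp only [hwdef]; ring
        _ = A i j * y j := by rw [div_mul_cancel₀ _ (ne_of_gt (hz j))]
    have ew' : ∀ j, w' j * (y j / z j) = A k j * y j := by
      intro j
      calc w' j * (y j / z j) = A k j * (y j / z j * z j) := by
            simp only [hw'def]; ring
        _ = A k j * y j := by rw [div_mul_cancel₀ _ (ne_of_gt (hz j))]
    have e1 : (∑ j, w j * (y j / z j)) = A.mulVec y i := by
      rw [mulVec_apply']
      exact Finset.sum_congr rfl fun j _ => ew j
    have e2 : (∑ j, w' j) = A.mulVec z k := by
      rw [mulVec_apply']
    have e3 : (∑ j, w j) = A.mulVec z i := by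
      rw [mulVec_apply']
    have e4 : (∑ j, w' j * (y j / z j)) = A.mulVec y k := by
      rw [mulVec_apply']
      exact Finset.sum_congr rfl fun j _ => ew' j
    rw [e1, e2, e3, e4] at hbox
    exact hbox
  -- convert to sup/inf bound
  have hK0 : 0 < K := lt_of_lt_of_le one_pos hK1
  have hT : ∀ i k, A.mulVec y i / A.mulVec z i ≤ K * (A.mulVec y k / A.mulVec z k) := by
    intro i k
    rw [mul_div_assoc' K, div_le_div_iff₀ (hAz i) (hAz k)]
    calc A.mulVec y i * A.mulVec z k ≤ K * (A.mulVec z i * A.mulVec y k) := CI i k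
      _ = K * A.mulVec y k * A.mulVec z i := by ring
  have h1 : ∀ k, (⨆ i, A.mulVec y i / A.mulVec z i) ≤
      K * (A.mulVec y k / A.mulVec z k) :=
    fun k => ciSup_le fun i => hT i k
  have h2 : (⨆ i, A.mulVec y i / A.mulVec z i) / K ≤
      ⨅ k, A.mulVec y k / A.mulVec z k := by
    apply le_ciInf
    intro k
    rw [div_le_iff₀ hK0]
    calc (⨆ i, A.mulVec y i / A.mulVec z i)
        ≤ K * (A.mulVec y k / A.mulVec z k) := h1 k
      _ = A.mulVec y k / A.mulVec z k * K := by ring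
  have hsupp : 0 < ⨆ i, A.mulVec y i / A.mulVec z i := supR_pos hN hAy hAz
  have hinfp : 0 < ⨅ i, A.mulVec y i / A.mulVec z i := infR_pos hN hAy hAz
  have h4 : (⨆ i, A.mulVec y i / A.mulVec z i) / (⨅ i, A.mulVec y i / A.mulVec z i)
      ≤ K := by
    rw [div_le_iff₀ hinfp]
    have h5 := (div_le_iff₀ hK0).1 h2
    calc (⨆ i, A.mulVec y i / A.mulVec z i)
        ≤ (⨅ k, A.mulVec y k / A.mulVec z k) * K := h5
      _ = K * ⨅ i, A.mulVec y i / A.mulVec z i := by ring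
  calc projDist (A.mulVec y) (A.mulVec z)
      = Real.log ((⨆ i, A.mulVec y i / A.mulVec z i) /
          (⨅ i, A.mulVec y i / A.mulVec z i)) := rfl
    _ ≤ Real.log K := Real.log_le_log (div_pos hsupp hinfp) h4
    _ = τ * Real.log b := Real.log_rpow (lt_of_lt_of_le one_pos hb1) τ
    _ = τ * (Real.log β - Real.log α) := by
        rw [hbdef, Real.log_div (ne_of_gt hβ0) (ne_of_gt hα0)]
    _ = τ * projDist y z := by rw [projDist_eq hN hy hz]

end Birkhoff


/-- contraction of the normalized iterates of a primitive matrix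
towards its Perron eigenvector, in the projective distance:
`d(F_M^m x, v_M) ≤ (τ^{⌊m/ℓ⌋}/(1−τ))·d_M(x)`. -/
theorem projective_convergence_to_perron_vector
    {N : ℕ} (hN : 0 < N) (M : Matrix (Fin N) (Fin N) ℝ)
    (hMnn : ∀ i j, 0 ≤ M i j) (ℓ : ℕ) (hprim : PrimIndex M ℓ)
    (ρ : ℝ) (hρ : 0 < ρ) (v : Fin N → ℝ) (hv : v ∈ simplex N)
    (heig : M.mulVec v = ρ • v)
    (x : Fin N → ℝ) (hx : x ∈ simplex N) (m : ℕ) :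
    projDist ((FM M)^[m] x) v ≤
      birkTau (M ^ ℓ) ^ (m / ℓ) / (1 - birkTau (M ^ ℓ)) * dMin M ℓ x := by
  obtain ⟨hℓ, hA, -⟩ := hprim
  obtain ⟨hxpos, hxsum⟩ := hx
  obtain ⟨hvpos, hvsum⟩ := hv
  haveI := nonemptyFin hN
  have hrow : ∀ i, ∃ j, 0 < M i j := row_pos hMnn hℓ hA
  have hτ0 : 0 ≤ birkTau (M ^ ℓ) := birkTau_nonneg hN hA
  have hτ1 : birkTau (M ^ ℓ) < 1 := birkTau_lt_one hN hA
  set τ := birkTau (M ^ ℓ) with hτdef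
  set q := m / ℓ with hqdef
  set r := m % ℓ with hrdef
  -- eigenvector iterates
  have heigk : ∀ k : ℕ, (M ^ k).mulVec v = (ρ ^ k) • v := by
    intro k
    induction k with
    | zero => simp [pow_zero, Matrix.one_mulVec]
    | succ k ih =>
      rw [pow_succ', ← Matrix.mulVec_mulVec, ih, Matrix.mulVec_smul, heig,
        smul_smul, ← pow_succ]
  -- positivity
  have hMm : Pos ((M ^ m).mulVec x) := pow_mulVec_pos hMnn hrow hxpos m
  have hMl : Pos ((M ^ ℓ).mulVec x) := pow_mulVec_pos hMnn hrow hxpos ℓ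
  -- step 1: replace the iterate by the matrix power
  obtain ⟨c, hc, hcit⟩ := FM_iter hN hMnn hrow hxpos m
  have e0 : projDist ((FM M)^[m] x) v = projDist ((M ^ m).mulVec x) v := by
    rw [hcit, projDist_smul_left hN hc hMm hvpos]
  -- step 2: replace v by (M^m) v
  have e1 : projDist ((M ^ m).mulVec x) v =
      projDist ((M ^ m).mulVec x) ((M ^ m).mulVec v) := by
    rw [heigk m, projDist_smul_right hN (pow_pos hρ m) hMm hvpos]
  -- contraction iterates
  have contr : ∀ (n : ℕ) (y' z' : Fin N → ℝ), Pos y' → Pos z' →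
      projDist (((M ^ ℓ) ^ n).mulVec y') (((M ^ ℓ) ^ n).mulVec z') ≤
        τ ^ n * projDist y' z' := by
    intro n
    induction n with
    | zero =>
      intro y' z' hy' hz'
      simp [pow_zero, Matrix.one_mulVec]
    | succ n ih =>
      intro y' z' hy' hz'
      have hrowA : ∀ i, ∃ j, 0 < (M ^ ℓ) i j := fun i => ⟨i, hA i i⟩
      have hp1 : Pos (((M ^ ℓ) ^ n).mulVec y') :=
        pow_mulVec_pos (fun i j => (hA i j).le) hrowA hy' n
      have hp2 : Pos (((M ^ ℓ) ^ n).mulVec z') :=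
        pow_mulVec_pos (fun i j => (hA i j).le) hrowA hz' n
      rw [pow_succ', ← Matrix.mulVec_mulVec, ← Matrix.mulVec_mulVec]
      calc projDist ((M ^ ℓ).mulVec (((M ^ ℓ) ^ n).mulVec y'))
            ((M ^ ℓ).mulVec (((M ^ ℓ) ^ n).mulVec z'))
          ≤ τ * projDist (((M ^ ℓ) ^ n).mulVec y') (((M ^ ℓ) ^ n).mulVec z') :=
            birkhoff_contraction hN _ hA hp1 hp2
        _ ≤ τ * (τ ^ n * projDist y' z') :=
            mul_le_mul_of_nonneg_left (ih y' z' hy' hz') hτ0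
        _ = τ ^ (n + 1) * projDist y' z' := by ring
  -- decomposition m = ℓ*q + r
  have hm : ℓ * q + r = m := Nat.div_add_mod m ℓ
  have hsplitx : (M ^ m).mulVec x = ((M ^ ℓ) ^ q).mulVec ((M ^ r).mulVec x) := by
    rw [Matrix.mulVec_mulVec, ← pow_mul, ← pow_add, hm]
  have hsplitv : (M ^ m).mulVec v = ((M ^ ℓ) ^ q).mulVec ((M ^ r).mulVec v) := by
    rw [Matrix.mulVec_mulVec, ← pow_mul, ← pow_add, hm]
  have hprx : Pos ((M ^ r).mulVec x) := pow_mulVec_pos hMnn hrow hxpos r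
  have hprv : Pos ((M ^ r).mulVec v) := pow_mulVec_pos hMnn hrow hvpos r
  have step2 : projDist ((M ^ m).mulVec x) ((M ^ m).mulVec v) ≤
      τ ^ q * projDist x v := by
    rw [hsplitx, hsplitv]
    calc projDist (((M ^ ℓ) ^ q).mulVec ((M ^ r).mulVec x))
          (((M ^ ℓ) ^ q).mulVec ((M ^ r).mulVec v))
        ≤ τ ^ q * projDist ((M ^ r).mulVec x) ((M ^ r).mulVec v) :=
          contr q _ _ hprx hprv
      _ ≤ τ ^ q * projDist x v :=
          mul_le_mul_of_nonneg_left
            (pow_nonexpansive hN hMnn hrow hxpos hvpos r) (pow_nonneg hτ0 q)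
  -- bound projDist x v by dMin/(1-τ)
  have tri : projDist x v ≤ projDist x ((M ^ ℓ).mulVec x) +
      projDist ((M ^ ℓ).mulVec x) v :=
    projDist_triangle hN hxpos hMl hvpos
  have cAx : projDist ((M ^ ℓ).mulVec x) v =
      projDist ((M ^ ℓ).mulVec x) ((M ^ ℓ).mulVec v) := by
    rw [heigk ℓ, projDist_smul_right hN (pow_pos hρ ℓ) hMl hvpos]
  have cA2 : projDist ((M ^ ℓ).mulVec x) ((M ^ ℓ).mulVec v) ≤ τ * projDist x v :=
    birkhoff_contraction hN _ hA hxpos hvpos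
  have hdxv : projDist x v ≤ projDist x ((M ^ ℓ).mulVec x) / (1 - τ) := by
    rw [le_div_iff₀ (by linarith : (0:ℝ) < 1 - τ)]
    have := cAx ▸ cA2
    nlinarith [tri, this]
  -- telescoping
  have tel : ∀ n : ℕ, projDist x ((M ^ n).mulVec x) ≤ n * projDist x (M.mulVec x) := by
    intro n
    induction n with
    | zero =>
      rw [pow_zero, Matrix.one_mulVec, projDist_self hN hxpos]
      simp
    | succ n ih =>
      have hMn : Pos ((M ^ n).mulVec x) := pow_mulVec_pos hMnn hrow hxpos n
      have hMx : Pos (M.mulVec x) := mulVec_pos M hMnn hrow hxpos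
      have hsucc : (M ^ (n + 1)).mulVec x = (M ^ n).mulVec (M.mulVec x) := by
        rw [Matrix.mulVec_mulVec, ← pow_succ]
      have hMn1 : Pos ((M ^ (n + 1)).mulVec x) := by
        rw [hsucc]; exact pow_mulVec_pos hMnn hrow hMx n
      have htri := projDist_triangle hN hxpos hMn hMn1
      have hne : projDist ((M ^ n).mulVec x) ((M ^ (n+1)).mulVec x) ≤
          projDist x (M.mulVec x) := by
        rw [hsucc]
        exact pow_nonexpansive hN hMnn hrow hxpos hMx n
      push_cast
      nlinarith [htri, hne, ih]
  -- dMin equals the ℓ-step distance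
  have hMx : Pos (M.mulVec x) := mulVec_pos M hMnn hrow hxpos
  have hd1 : projDist x (FM M x) = projDist x (M.mulVec x) := by
    rw [FM_eq, projDist_smul_right hN
      (inv_pos.2 (sum_mulVec_pos hN hMx)) hxpos hMx]
  obtain ⟨c2, hc2, hcit2⟩ := FM_iter hN hMnn hrow hxpos ℓ
  have hd2 : projDist x ((FM M)^[ℓ] x) = projDist x ((M ^ ℓ).mulVec x) := by
    rw [hcit2, projDist_smul_right hN hc2 hxpos hMl]
  have hdmin : dMin M ℓ x = projDist x ((M ^ ℓ).mulVec x) := by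
    rw [dMin, hd1, hd2]
    exact min_eq_right (tel ℓ)
  -- final chain
  have hfin : projDist ((FM M)^[m] x) v ≤ τ ^ q * projDist x v := by
    rw [e0, e1]; exact step2
  have hq0 : (0:ℝ) ≤ τ ^ q := pow_nonneg hτ0 q
  calc projDist ((FM M)^[m] x) v ≤ τ ^ q * projDist x v := hfin
    _ ≤ τ ^ q * (projDist x ((M ^ ℓ).mulVec x) / (1 - τ)) :=
        mul_le_mul_of_nonneg_left hdxv hq0
    _ = τ ^ q / (1 - τ) * dMin M ℓ x := by rw [hdmin]; ring

end PerronApprox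
end

section
/- Let A be a finite alphabet, X ⊆ A^ℕ a subshift which is specified with specification length ℓ, and φ : A^ℕ → ℝ Hölder continuous. Then for all integers n ≥ m, every entry of the (ℓ+n+1)-st power of the transfer matrix M_{(m,n)} is strictly positive; in particular M_{(m,n)} is a primitive matrix. -/
open MeasureTheory Filter
open scoped BigOperators ENNReal

namespace GibbsApprox

variable {A : Type} [Fintype A] [DecidableEq A] [Nonempty A]
  [TopologicalSpace A] [DiscreteTopology A] [MeasurableSpace A]

/-- The shift map on `ℕ → A`. -/
def shift (a : ℕ → A) : ℕ → A := fun i => a (i + 1)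

/-- The word `a(0:n)` of length `n+1`. -/
def word0 (a : ℕ → A) (n : ℕ) : Fin (n + 1) → A := fun i => a i

/-- Cylinder set determined by a word of length `n+1`. -/
def cylW {n : ℕ} (w : Fin (n + 1) → A) : Set (ℕ → A) :=
  {b | ∀ i : Fin (n + 1), b i = w i}

/-- `X`-admissible words of length `n+1`. -/
def lang (X : Set (ℕ → A)) (n : ℕ) : Set (Fin (n + 1) → A) :=
  {w | ∃ a ∈ X, word0 a n = w}

/-- A subshift: a closed shift-invariant subset of `ℕ → A`. -/
def IsSubshift (X : Set (ℕ → A)) : Prop :=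
  IsClosed X ∧ ∀ a ∈ X, shift a ∈ X

/-- Periodic points of period `p` in `X`. -/
def per (X : Set (ℕ → A)) (p : ℕ) : Set (ℕ → A) :=
  {a | a ∈ X ∧ shift^[p] a = a}

/-- Specification with specification length `ℓ`. -/
def Specified (X : Set (ℕ → A)) (ℓ : ℕ) : Prop :=
  ∀ (m n : ℕ) (u : Fin (m + 1) → A) (v : Fin (n + 1) → A),
    u ∈ lang X m → v ∈ lang X n → ∀ k, ℓ ≤ k →
      ∃ c ∈ per X (m + n + k + 2),
        (∀ i : Fin (m + 1), c i = u i) ∧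
        (∀ j : Fin (n + 1), c (m + k + 1 + (j : ℕ)) = v j)

/-- A finite word (as a `List`) is in the language of `X`. -/
def inLang (X : Set (ℕ → A)) (w : List A) : Prop :=
  ∃ a ∈ X, ∀ i : Fin w.length, a (i : ℕ) = w.get i

/-- Follower set of a word. -/
def follower (X : Set (ℕ → A)) (w : List A) : Set (List A) :=
  {u | inLang X (w ++ u)}

/-- Soficity: finitely many follower sets. -/
def IsSofic (X : Set (ℕ → A)) : Prop :=
  Set.Finite {S : Set (List A) | ∃ w : List A, inLang X w ∧ S = follower X w}

/-- Hölder continuity of a potential with constant `C` and exponent `θ`. -/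
def HolderPot (φ : (ℕ → A) → ℝ) (C θ : ℝ) : Prop :=
  ∀ (n : ℕ) (a b : ℕ → A), (∀ i, i ≤ n → a i = b i) → |φ a - φ b| ≤ C * θ ^ n

/-- Birkhoff sum `S_k φ = ∑_{i=0}^k φ ∘ T^i`. -/
noncomputable def birkhoff (φ : (ℕ → A) → ℝ) (k : ℕ) (a : ℕ → A) : ℝ :=
  ∑ i ∈ Finset.range (k + 1), φ (shift^[i] a)

/-- The finite type approximation of order `m` of `X`. -/
def FTA (X : Set (ℕ → A)) (m : ℕ) : Set (ℕ → A) :=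
  {a | ∀ j : ℕ, (fun i : Fin (m + 1) => a (j + (i : ℕ))) ∈ lang X m}

/-- The distance `D` metrizing the weak topology. -/
noncomputable def wdist (μ ν : Measure (ℕ → A)) : ℝ :=
  ∑' n : ℕ, (2 : ℝ)⁻¹ ^ (n + 1) *
    ∑ w : Fin (n + 1) → A, |(μ (cylW w)).toReal - (ν (cylW w)).toReal|

/-- `μ` is a Gibbs measure for `φ` on the subshift `Y`, with pressure `P` and
constant `C₀`. -/
structure IsGibbs (φ : (ℕ → A) → ℝ) (Y : Set (ℕ → A)) (μ : Measure (ℕ → A))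
    (P C₀ : ℝ) : Prop where
  prob : IsProbabilityMeasure μ
  invariant : μ.map shift = μ
  supp : μ Yᶜ = 0
  posC : 0 < C₀
  lower : ∀ a ∈ Y, ∀ k : ℕ,
    C₀⁻¹ ≤ (μ (cylW (word0 a k))).toReal / Real.exp (birkhoff φ k a - (k + 1) * P)
  upper : ∀ a ∈ Y, ∀ k : ℕ,
    (μ (cylW (word0 a k))).toReal / Real.exp (birkhoff φ k a - (k + 1) * P) ≤ C₀

/-- The periodic extension of a word of length `p+1`. -/
def perExt {p : ℕ} (u : Fin (p + 1) → A) : ℕ → A :=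
  fun i => u ⟨i % (p + 1), Nat.mod_lt i (Nat.succ_pos p)⟩

open Classical in
/-- Words of length `p+1` whose periodic extension lies in `Y`; these
parametrize `per_{p+1}(Y)`. -/
noncomputable def perWords (Y : Set (ℕ → A)) (p : ℕ) : Finset (Fin (p + 1) → A) :=
  Finset.univ.filter (fun u => perExt u ∈ Y)

/-- Normalizing constant of the elementary Gibbs measure. -/
noncomputable def elemZ (φ : (ℕ → A) → ℝ) (Y : Set (ℕ → A)) (p : ℕ) : ℝ :=
  ∑ u ∈ perWords Y p, Real.exp (birkhoff φ p (perExt u))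

/-- The elementary Gibbs measure `E_{(m,p)}` (here on a general subshift `Y`,
apply with `Y = FTA X m`): atomic on `per_{p+1}(Y)` with weights
proportional to `exp (S_p φ)`. -/
noncomputable def elemGibbs (φ : (ℕ → A) → ℝ) (Y : Set (ℕ → A)) (p : ℕ) :
    Measure (ℕ → A) :=
  ∑ u ∈ perWords Y p,
    ENNReal.ofReal (Real.exp (birkhoff φ p (perExt u)) / elemZ φ Y p) •
      Measure.dirac (perExt u)

/-- `∑_{a ∈ per_{k+1}(Y)} exp (S_k φ (a))`. -/
noncomputable def pressureSum (φ : (ℕ → A) → ℝ) (Y : Set (ℕ → A)) (k : ℕ) : ℝ :=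
  ∑ u ∈ perWords Y k, Real.exp (birkhoff φ k (perExt u))

/-- `P` is the topological pressure of `φ` on `Y`. -/
def HasPressure (φ : (ℕ → A) → ℝ) (Y : Set (ℕ → A)) (P : ℝ) : Prop :=
  Tendsto (fun k : ℕ => Real.log (pressureSum φ Y k) / (k + 1)) atTop (nhds P)

/-- `φ^n(w) = max {φ(b) : b ∈ [w]}`. -/
noncomputable def potWord (φ : (ℕ → A) → ℝ) {n : ℕ} (w : Fin (n + 1) → A) : ℝ :=
  sSup (φ '' cylW w)

/-- The word `w · x` of length `n+2`. -/
def extWord {n : ℕ} (w : Fin (n + 1) → A) (x : A) : Fin (n + 2) → A :=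
  fun i => if h : (i : ℕ) < n + 1 then w ⟨i, h⟩ else x

open Classical in
/-- The admissible words of length `n+1` of `Y`, as a `Finset`. -/
noncomputable def langFinset (Y : Set (ℕ → A)) (n : ℕ) : Finset (Fin (n + 1) → A) :=
  Finset.univ.filter (fun w => w ∈ lang Y n)

open Classical in
/-- The transfer matrix `M_{(m,n)}`, indexed by `L_{(m,n)} = L_n(X_m)`. -/
noncomputable def transferM (φ : (ℕ → A) → ℝ) (X : Set (ℕ → A)) (m n : ℕ) :
    Matrix {w // w ∈ langFinset (FTA X m) n} {w // w ∈ langFinset (FTA X m) n} ℝ :=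
  fun a b =>
    if ∀ i : Fin n, (a : Fin (n + 1) → A) i.succ = (b : Fin (n + 1) → A) i.castSucc
    then Real.exp (potWord φ
      (extWord (a : Fin (n + 1) → A) ((b : Fin (n + 1) → A) (Fin.last n))))
    else 0

/-- `n`-th term of the sequence defining the measure-theoretic entropy. -/
noncomputable def entropySum (ν : Measure (ℕ → A)) (n : ℕ) : ℝ :=
  -(∑ w : Fin (n + 1) → A,
      (ν (cylW w)).toReal * Real.log (ν (cylW w)).toReal) / (n + 1)

/-- The measure-theoretic entropy of `ν` is `h`. -/
def HasEntropy (ν : Measure (ℕ → A)) (h : ℝ) : Prop :=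
  Tendsto (fun n => entropySum ν n) atTop (nhds h)

/-- `n`-th term of the sequence defining the relative entropy `h(ν|μ)`. -/
noncomputable def relEntropySum (ν μ : Measure (ℕ → A)) (n : ℕ) : ℝ :=
  (∑ w : Fin (n + 1) → A,
      (ν (cylW w)).toReal *
        Real.log ((ν (cylW w)).toReal / (μ (cylW w)).toReal)) / (n + 1)

/-- The relative entropy of `ν` with respect to `μ` is `h`. -/
def HasRelEntropy (ν μ : Measure (ℕ → A)) (h : ℝ) : Prop :=
  Tendsto (fun n => relEntropySum ν μ n) atTop (nhds h)

/-- `Φ(w) = max {S_n φ (b) : b ∈ [w]}` for a word `w` of length `n+1`. -/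
noncomputable def birkWord (φ : (ℕ → A) → ℝ) {n : ℕ} (w : Fin (n + 1) → A) : ℝ :=
  sSup (birkhoff φ n '' cylW w)

open Classical in
/-- The metric `d(a,b) = exp (−min {n : a n ≠ b n})` on `A^ℕ`. -/
noncomputable def seqDist (a b : ℕ → A) : ℝ :=
  if a = b then 0 else Real.exp (-((sInf {n : ℕ | a n ≠ b n} : ℕ) : ℝ))

/-- Hausdorff distance between two subsets of `A^ℕ`, for the metric `seqDist`. -/
noncomputable def hausd (S T : Set (ℕ → A)) : ℝ :=
  max (⨆ a : S, ⨅ b : T, seqDist (a : ℕ → A) b)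
      (⨆ b : T, ⨅ a : S, seqDist (a : ℕ → A) b)



/-- Auxiliary: applying the iterated shift. -/
lemma shift_iter_apply (t : ℕ) : ∀ (y : ℕ → A) (i : ℕ),
    (shift^[t] y) i = y (t + i) := by
  induction t with
  | zero => intro y i; simp
  | succ t ih =>
    intro y i
    rw [Function.iterate_succ_apply, ih]
    simp only [shift]
    congr 1
    omega

/-- Auxiliary: a subshift is invariant under iterated shift. -/
lemma shift_iter_mem {X : Set (ℕ → A)} (hX : IsSubshift X) {y : ℕ → A}
    (hy : y ∈ X) (t : ℕ) : shift^[t] y ∈ X := by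
  induction t with
  | zero => simpa
  | succ t ih => rw [Function.iterate_succ_apply']; exact hX.2 _ ih

/-- Windows of points of `X` are in the language. -/
lemma window_mem_lang {X : Set (ℕ → A)} (hX : IsSubshift X) {y : ℕ → A}
    (hy : y ∈ X) (m t : ℕ) :
    (fun i : Fin (m + 1) => y (t + (i : ℕ))) ∈ lang X m := by
  refine ⟨shift^[t] y, shift_iter_mem hX hy t, ?_⟩
  funext i
  exact shift_iter_apply t y i

/-- FTA is invariant under iterated shift. -/
lemma FTA_shift_iter_mem {X : Set (ℕ → A)} {m : ℕ} {y : ℕ → A}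
    (hy : y ∈ FTA X m) (t : ℕ) : shift^[t] y ∈ FTA X m := by
  intro j
  have := hy (t + j)
  convert this using 2 with i
  rw [shift_iter_apply]
  congr 1
  omega

/-- Entries of the transfer matrix are nonnegative. -/
lemma transferM_nonneg (φ : (ℕ → A) → ℝ) (X : Set (ℕ → A)) (m n : ℕ)
    (a b : {w // w ∈ langFinset (FTA X m) n}) :
    0 ≤ transferM φ X m n a b := by
  unfold transferM
  split
  · exact (Real.exp_pos _).le
  · exact le_refl 0

/-- Entries of powers of the transfer matrix are nonnegative. -/
lemma transferM_pow_nonneg (φ : (ℕ → A) → ℝ) (X : Set (ℕ → A)) (m n : ℕ)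
    (k : ℕ) (a b : {w // w ∈ langFinset (FTA X m) n}) :
    0 ≤ ((transferM φ X m n) ^ k) a b := by
  induction k generalizing a b with
  | zero =>
    rw [pow_zero]
    by_cases h : a = b
    · subst h; rw [Matrix.one_apply_eq]; exact zero_le_one
    · rw [Matrix.one_apply_ne h]
  | succ k ih =>
    rw [pow_succ', Matrix.mul_apply]
    exact Finset.sum_nonneg fun c _ =>
      mul_nonneg (transferM_nonneg φ X m n a c) (ih c b)

/-- If an orbit segment in `FTA X m` connects words `a` and `b` (distance `L`),
then the `(a, b)`-entry of the `L`-th power of the transfer matrix is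
positive. -/
lemma transferM_pow_pos_of_orbit (φ : (ℕ → A) → ℝ) (X : Set (ℕ → A)) (m n : ℕ) :
    ∀ (L : ℕ) (x : ℕ → A), x ∈ FTA X m →
      ∀ (a b : {w // w ∈ langFinset (FTA X m) n}),
        (∀ i : Fin (n + 1), x (i : ℕ) = (a : Fin (n + 1) → A) i) →
        (∀ i : Fin (n + 1), x (L + (i : ℕ)) = (b : Fin (n + 1) → A) i) →
        0 < ((transferM φ X m n) ^ L) a b := by
  intro L
  induction L with
  | zero =>
    intro x hx a b ha hb
    have hab : a = b := by
      apply Subtype.ext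
      funext i
      rw [← ha i, ← hb i]
      congr 1
      omega
    subst hab
    rw [pow_zero, Matrix.one_apply_eq]
    exact zero_lt_one
  | succ L ih =>
    intro x hx a b ha hb
    classical
    have hsx : shift x ∈ FTA X m := by
      have := FTA_shift_iter_mem hx 1
      simpa using this
    have hw' : word0 (shift x) n ∈ langFinset (FTA X m) n := by
      rw [langFinset, Finset.mem_filter]
      exact ⟨Finset.mem_univ _, shift x, hsx, rfl⟩
    set a' : {w // w ∈ langFinset (FTA X m) n} := ⟨word0 (shift x) n, hw'⟩ with ha'def
    have hMaa' : 0 < transferM φ X m n a a' := by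
      unfold transferM
      rw [if_pos]
      · exact Real.exp_pos _
      · intro i
        rw [← ha i.succ]
        show x (i.succ : ℕ) = word0 (shift x) n i.castSucc
        simp only [word0, shift, Fin.coe_castSucc, Fin.val_succ]
    have hIH : 0 < ((transferM φ X m n) ^ L) a' b := by
      apply ih (shift x) hsx
      · intro i; rfl
      · intro i
        show shift x (L + (i : ℕ)) = _
        rw [← hb i]
        simp only [shift]
        congr 1
        omega
    rw [pow_succ', Matrix.mul_apply]
    apply Finset.sum_pos'
    · intro c _
      exact mul_nonneg (transferM_nonneg φ X m n a c)
        (transferM_pow_nonneg φ X m n L c b)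
    · exact ⟨a', Finset.mem_univ _, mul_pos hMaa' hIH⟩

/-- for a specified subshift with specification length `ℓ`, every
entry of the `(ℓ+n+1)`-st power of the transfer matrix `M_{(m,n)}` is strictly
positive; in particular `M_{(m,n)}` is primitive. -/
theorem transfer_matrix_primitive
    (X : Set (ℕ → A)) (hX : IsSubshift X)
    (ℓ : ℕ) (hspec : Specified X ℓ)
    (φ : (ℕ → A) → ℝ) (C θ : ℝ) (hC : 0 < C) (hθ : θ ∈ Set.Ioo (0 : ℝ) 1)
    (hH : HolderPot φ C θ) :
    ∀ m n : ℕ, m ≤ n →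
      (∀ a b, 0 < ((transferM φ X m n) ^ (ℓ + n + 1)) a b) ∧
      ∃ k : ℕ, 0 < k ∧ ∀ a b, 0 < ((transferM φ X m n) ^ k) a b := by
  intro m n hmn
  obtain ⟨q, hq⟩ := Nat.exists_eq_add_of_le hmn
  subst hq
  have key : ∀ a b : {w // w ∈ langFinset (FTA X m) (m + q)},
      0 < ((transferM φ X m (m + q)) ^ (ℓ + (m + q) + 1)) a b := by
    intro a b
    classical
    have ha := a.2
    have hb := b.2
    simp only [langFinset, Finset.mem_filter] at ha hb
    obtain ⟨pa, hpaX, hpa⟩ := ha.2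
    obtain ⟨pb, hpbX, hpb⟩ := hb.2
    have hu : (fun i : Fin (m + 1) => pa (q + (i : ℕ))) ∈ lang X m := hpaX q
    have hv : (fun i : Fin (m + 1) => pb (0 + (i : ℕ))) ∈ lang X m := hpbX 0
    obtain ⟨c, hcper, hc1, hc2⟩ := hspec m m _ _ hu hv ℓ le_rfl
    have hcX : c ∈ X := hcper.1
    set x : ℕ → A := fun i =>
      if i ≤ m + q then pa i
      else if i < m + q + ℓ + 1 then c (i - q)
      else pb (i - (m + q + ℓ + 1)) with hxdef
    have F1 : ∀ i, i ≤ m + q → x i = pa i := by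
      intro i hi
      simp [hxdef, hi]
    have F2 : ∀ t, x (m + q + ℓ + 1 + t) = pb t := by
      intro t
      have h1 : ¬ (m + q + ℓ + 1 + t ≤ m + q) := by omega
      have h2 : ¬ (m + q + ℓ + 1 + t < m + q + ℓ + 1) := by omega
      simp only [hxdef, if_neg h1, if_neg h2]
      congr 1
      omega
    have F3 : ∀ t, t ≤ 2 * m + ℓ + 1 → x (q + t) = c t := by
      intro t ht
      by_cases h1 : t ≤ m
      · rw [F1 (q + t) (by omega)]
        exact (hc1 ⟨t, by omega⟩).symm
      · by_cases h2 : t < m + ℓ + 1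
        · have h3 : ¬ (q + t ≤ m + q) := by omega
          have h4 : q + t < m + q + ℓ + 1 := by omega
          simp only [hxdef, if_neg h3, if_pos h4]
          congr 1
          omega
        · rw [show q + t = m + q + ℓ + 1 + (t - (m + ℓ + 1)) by omega, F2]
          have h5 := hc2 ⟨t - (m + ℓ + 1), by omega⟩
          simp only at h5
          rw [show m + ℓ + 1 + (t - (m + ℓ + 1)) = t by omega] at h5
          rw [h5]
          congr 1
          omega
    have hxFTA : x ∈ FTA X m := by
      intro j
      by_cases h1 : j + m ≤ m + q
      · have heq : (fun i : Fin (m + 1) => x (j + (i : ℕ)))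
            = (fun i : Fin (m + 1) => pa (j + (i : ℕ))) := by
          funext i
          exact F1 _ (by have := i.isLt; omega)
        rw [heq]
        exact hpaX j
      · by_cases h2 : j ≤ m + q + ℓ + 1
        · have heq : (fun i : Fin (m + 1) => x (j + (i : ℕ)))
              = (fun i : Fin (m + 1) => c ((j - q) + (i : ℕ))) := by
            funext i
            rw [show j + (i : ℕ) = q + ((j - q) + (i : ℕ)) by omega]
            exact F3 _ (by have := i.isLt; omega)
          rw [heq]
          exact window_mem_lang hX hcX m (j - q)
        · have heq : (fun i : Fin (m + 1) => x (j + (i : ℕ)))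
              = (fun i : Fin (m + 1) => pb ((j - (m + q + ℓ + 1)) + (i : ℕ))) := by
            funext i
            rw [show j + (i : ℕ) = m + q + ℓ + 1 + ((j - (m + q + ℓ + 1)) + (i : ℕ)) by omega]
            exact F2 _
          rw [heq]
          exact hpbX _
    apply transferM_pow_pos_of_orbit φ X m (m + q) (ℓ + (m + q) + 1) x hxFTA a b
    · intro i
      rw [F1 (i : ℕ) (by have := i.isLt; omega), ← hpa]
      rfl
    · intro i
      rw [show ℓ + (m + q) + 1 + (i : ℕ) = m + q + ℓ + 1 + (i : ℕ) by omega, F2, ← hpb]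
      rfl
  exact ⟨key, ℓ + (m + q) + 1, by omega, key⟩

end GibbsApprox
end
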